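/- For the planar system ẋ = x(1-y+cx), ẏ = y(-1+x) with c > 0: if f = Σ_{k≥0} f_k(x) y^k is a formal power series with x(1-y+cx)∂f/∂x + y(-1+x)∂f/∂y = 0, then the coefficient f₁(x) satisfies x(1+cx)f₁'(x) = (1-x)f₁(x), and the only formal power series solution of this ODE that extends to a formal first integral is f₁ = 0. -/

import Mathlib

open MvPowerSeries

/-- Formal partial derivative of a multivariate formal power series. -/
noncomputable def formalPderiv (i : Fin 2) (f : MvPowerSeries (Fin 2) ℂ) :
    MvPowerSeries (Fin 2) ℂ :=
  fun n => ((n i : ℂ) + 1) * f (n + Finsupp.single i 1)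

/-- The coefficient of `x^n y^k` in `f`. -/
noncomputable def Ac (f : MvPowerSeries (Fin 2) ℂ) (n k : ℕ) : ℂ :=
  f (Finsupp.single 0 n + Finsupp.single 1 k)

lemma aux_X_mul (i : Fin 2) (g : MvPowerSeries (Fin 2) ℂ) (p : Fin 2 →₀ ℕ) :
    coeff (Finsupp.single i 1 + p) (X i * g) = coeff p g := by
  rw [X_def, coeff_add_monomial_mul, one_mul]

lemma aux_X_mul_zero (i : Fin 2) (g : MvPowerSeries (Fin 2) ℂ) (m : Fin 2 →₀ ℕ)
    (h : m i = 0) : coeff m (X i * g) = 0 := by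
  rw [X_def, coeff_monomial_mul, if_neg]
  simp [Finsupp.single_le_iff, h]

lemma fs1 (n k : ℕ) : (Finsupp.single (0 : Fin 2) (n+1) + Finsupp.single 1 k)
    = Finsupp.single 0 1 + (Finsupp.single 0 n + Finsupp.single 1 k) := by
  rw [Finsupp.single_add]; abel

lemma fs2 (n k : ℕ) : (Finsupp.single (0 : Fin 2) n + Finsupp.single 1 (k+1))
    = Finsupp.single 1 1 + (Finsupp.single 0 n + Finsupp.single 1 k) := by
  rw [Finsupp.single_add]; abel

lemma coeff_D0 (f : MvPowerSeries (Fin 2) ℂ) (n k : ℕ) :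
    coeff (Finsupp.single 0 n + Finsupp.single 1 k) (formalPderiv 0 f)
      = ((n : ℂ) + 1) * Ac f (n+1) k := by
  rw [coeff_apply]
  unfold formalPderiv Ac
  rw [show ((Finsupp.single (0:Fin 2) n + Finsupp.single 1 k) + Finsupp.single 0 1)
      = Finsupp.single 0 (n+1) + Finsupp.single 1 k by rw [Finsupp.single_add]; abel]
  simp [Finsupp.single_apply]

lemma coeff_D1 (f : MvPowerSeries (Fin 2) ℂ) (n k : ℕ) :
    coeff (Finsupp.single 0 n + Finsupp.single 1 k) (formalPderiv 1 f)
      = ((k : ℂ) + 1) * Ac f n (k+1) := by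
  rw [coeff_apply]
  unfold formalPderiv Ac
  rw [show ((Finsupp.single (0:Fin 2) n + Finsupp.single 1 k) + Finsupp.single 1 1)
      = Finsupp.single 0 n + Finsupp.single 1 (k+1) by rw [Finsupp.single_add]; abel]
  simp [Finsupp.single_apply]

/-- For the planar system ẋ = x(1-y+cx), ẏ = y(-1+x) with c > 0: if
f = Σ_k f_k(x) y^k is a formal power series first integral, then f₁(x) satisfies
x(1+cx)f₁'(x) = (1-x)f₁(x), and f₁ = 0. -/
theorem stmt_14 (c : ℝ) (hc : 0 < c) (f : MvPowerSeries (Fin 2) ℂ)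
    (heq : X 0 * (1 - X 1 + (C (c : ℂ) : MvPowerSeries (Fin 2) ℂ) * X 0) * formalPderiv 0 f
      + X 1 * (-1 + X 0) * formalPderiv 1 f = 0)
    (f₁ : PowerSeries ℂ)
    (hf₁ : f₁ = PowerSeries.mk fun n => f (Finsupp.single 0 n + Finsupp.single 1 1)) :
    PowerSeries.X * (1 + (PowerSeries.C (c : ℂ) : PowerSeries ℂ) * PowerSeries.X)
        * PowerSeries.derivative ℂ f₁
      = (1 - PowerSeries.X) * f₁ ∧ f₁ = 0 := by
  have hcoeff : ∀ m : Fin 2 →₀ ℕ,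
      coeff m (X 0 * formalPderiv 0 f) - coeff m (X 0 * (X 1 * formalPderiv 0 f))
        + (c : ℂ) * coeff m (X 0 * (X 0 * formalPderiv 0 f))
        - coeff m (X 1 * formalPderiv 1 f)
        + coeff m (X 0 * (X 1 * formalPderiv 1 f)) = 0 := by
    intro m
    have e : X 0 * (1 - X 1 + (C (c : ℂ) : MvPowerSeries (Fin 2) ℂ) * X 0) * formalPderiv 0 f
        + X 1 * (-1 + X 0) * formalPderiv 1 f
      = X 0 * formalPderiv 0 f - X 0 * (X 1 * formalPderiv 0 f)
        + (C (c : ℂ) : MvPowerSeries (Fin 2) ℂ) * (X 0 * (X 0 * formalPderiv 0 f))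
        - X 1 * formalPderiv 1 f + X 0 * (X 1 * formalPderiv 1 f) := by ring
    have h0 := heq
    rw [e] at h0
    have h := congrArg (coeff m) h0
    simpa [map_add, map_sub, coeff_C_mul] using h
  -- the equation from the coefficient of x^0 y^(k+1)
  have EqY : ∀ k : ℕ, ((k : ℂ) + 1) * Ac f 0 (k+1) = 0 := by
    intro k
    have h := hcoeff (Finsupp.single 0 0 + Finsupp.single 1 (k+1))
    have t4 : coeff (Finsupp.single 0 0 + Finsupp.single 1 (k+1))
        (X 1 * formalPderiv 1 f) = ((k : ℂ) + 1) * Ac f 0 (k+1) := by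
      rw [fs2, aux_X_mul, coeff_D1]
    rw [t4, aux_X_mul_zero 0 _ _ (by simp), aux_X_mul_zero 0 _ _ (by simp),
      aux_X_mul_zero 0 _ _ (by simp), aux_X_mul_zero 0 _ _ (by simp)] at h
    linear_combination -h
  have A0k : ∀ k : ℕ, Ac f 0 (k+1) = 0 := by
    intro k
    have hk : ((k : ℂ) + 1) ≠ 0 := by
      have := Nat.cast_ne_zero (R := ℂ).mpr (Nat.succ_ne_zero k)
      push_cast at this; exact this
    exact (mul_eq_zero.mp (EqY k)).resolve_left hk
  -- the equation from the coefficient of x^(n+1) y^0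
  have EqX : ∀ n : ℕ, ((n : ℂ) + 1) * Ac f (n+1) 0 + (c : ℂ) * (n : ℂ) * Ac f n 0 = 0 := by
    intro n
    have h := hcoeff (Finsupp.single 0 (n+1) + Finsupp.single 1 0)
    have t1 : coeff (Finsupp.single 0 (n+1) + Finsupp.single 1 0)
        (X 0 * formalPderiv 0 f) = ((n : ℂ) + 1) * Ac f (n+1) 0 := by
      rw [fs1, aux_X_mul, coeff_D0]
    have t2 : coeff (Finsupp.single 0 (n+1) + Finsupp.single 1 0)
        (X 0 * (X 1 * formalPderiv 0 f)) = 0 := by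
      rw [fs1, aux_X_mul, aux_X_mul_zero 1 _ _ (by simp)]
    have t5 : coeff (Finsupp.single 0 (n+1) + Finsupp.single 1 0)
        (X 0 * (X 1 * formalPderiv 1 f)) = 0 := by
      rw [fs1, aux_X_mul, aux_X_mul_zero 1 _ _ (by simp)]
    have t4 : coeff (Finsupp.single 0 (n+1) + Finsupp.single 1 0)
        (X 1 * formalPderiv 1 f) = 0 := aux_X_mul_zero 1 _ _ (by simp)
    have t3 : coeff (Finsupp.single 0 (n+1) + Finsupp.single 1 0)
        (X 0 * (X 0 * formalPderiv 0 f)) = (n : ℂ) * Ac f n 0 := by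
      rcases n with _ | m
      · rw [fs1, aux_X_mul, aux_X_mul_zero 0 _ _ (by simp)]
        simp
      · rw [fs1 (m+1) 0, aux_X_mul, fs1 m 0, aux_X_mul, coeff_D0]
        push_cast; ring
    rw [t1, t2, t3, t4, t5] at h
    linear_combination h
  -- the equation from the coefficient of x^(n+1) y^(k+1)
  have EqG : ∀ n k : ℕ,
      ((n : ℂ) + 1) * Ac f (n+1) (k+1) - ((n : ℂ) + 1) * Ac f (n+1) k
        + (c : ℂ) * (n : ℂ) * Ac f n (k+1)
        - ((k : ℂ) + 1) * Ac f (n+1) (k+1) + ((k : ℂ) + 1) * Ac f n (k+1) = 0 := by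
    intro n k
    have h := hcoeff (Finsupp.single 0 (n+1) + Finsupp.single 1 (k+1))
    have t1 : coeff (Finsupp.single 0 (n+1) + Finsupp.single 1 (k+1))
        (X 0 * formalPderiv 0 f) = ((n : ℂ) + 1) * Ac f (n+1) (k+1) := by
      rw [fs1, aux_X_mul, coeff_D0]
    have t2 : coeff (Finsupp.single 0 (n+1) + Finsupp.single 1 (k+1))
        (X 0 * (X 1 * formalPderiv 0 f)) = ((n : ℂ) + 1) * Ac f (n+1) k := by
      rw [fs1, aux_X_mul, fs2, aux_X_mul, coeff_D0]
    have t4 : coeff (Finsupp.single 0 (n+1) + Finsupp.single 1 (k+1))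
        (X 1 * formalPderiv 1 f) = ((k : ℂ) + 1) * Ac f (n+1) (k+1) := by
      rw [fs2, aux_X_mul, coeff_D1]
    have t5 : coeff (Finsupp.single 0 (n+1) + Finsupp.single 1 (k+1))
        (X 0 * (X 1 * formalPderiv 1 f)) = ((k : ℂ) + 1) * Ac f n (k+1) := by
      rw [fs1, aux_X_mul, fs2, aux_X_mul, coeff_D1]
    have t3 : coeff (Finsupp.single 0 (n+1) + Finsupp.single 1 (k+1))
        (X 0 * (X 0 * formalPderiv 0 f)) = (n : ℂ) * Ac f n (k+1) := by
      rcases n with _ | m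
      · rw [fs1, aux_X_mul, aux_X_mul_zero 0 _ _ (by simp)]
        simp
      · rw [fs1 (m+1) (k+1), aux_X_mul, fs1 m (k+1), aux_X_mul, coeff_D0]
        push_cast; ring
    rw [t1, t2, t3, t4, t5] at h
    linear_combination h
  -- the coefficients of f₀ vanish
  have hb : ∀ n : ℕ, Ac f (n+1) 0 = 0 := by
    intro n
    induction n with
    | zero =>
      have := EqX 0
      simpa using this
    | succ m ih =>
      have h := EqX (m+1)
      rw [ih] at h
      have hm : ((m : ℂ) + 1 + 1) ≠ 0 := by
        have := Nat.cast_ne_zero (R := ℂ).mpr (Nat.succ_ne_zero (m+1))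
        push_cast at this; exact this
      have h' : ((m : ℂ) + 1 + 1) * Ac f (m+2) 0 = 0 := by
        push_cast at h ⊢; linear_combination h
      exact (mul_eq_zero.mp h').resolve_left hm
  -- the recursion for the coefficients of f₁
  have arec : ∀ n : ℕ, (n : ℂ) * Ac f (n+1) 1 + ((c : ℂ) * (n : ℂ) + 1) * Ac f n 1 = 0 := by
    intro n
    have h := EqG n 0
    rw [hb n] at h
    push_cast at h ⊢
    linear_combination h
  have hc' : (c : ℂ) ≠ 0 := Complex.ofReal_ne_zero.mpr hc.ne'
  -- a₁ = 0, using the coefficient of f₂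
  have ha1 : Ac f 1 1 = 0 := by
    have h02 : Ac f 0 2 = 0 := A0k 1
    have h12 : Ac f 1 2 = -Ac f 1 1 := by
      have h := EqG 0 1
      rw [h02] at h
      push_cast at h
      linear_combination -h
    have h21 : Ac f 2 1 = -((c : ℂ) + 1) * Ac f 1 1 := by
      have h := arec 1
      push_cast at h
      linear_combination h
    have h := EqG 1 1
    rw [h12, h21] at h
    push_cast at h
    have hcA : (c : ℂ) * Ac f 1 1 = 0 := by linear_combination h
    exact (mul_eq_zero.mp hcA).resolve_left hc'
  -- all coefficients of f₁ vanish
  have ha : ∀ n : ℕ, Ac f n 1 = 0 := by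
    intro n
    induction n with
    | zero => exact A0k 0
    | succ m ih =>
      rcases m with _ | j
      · exact ha1
      · have h := arec (j+1)
        rw [ih] at h
        have hj : ((j : ℂ) + 1) ≠ 0 := by
          have := Nat.cast_ne_zero (R := ℂ).mpr (Nat.succ_ne_zero j)
          push_cast at this; exact this
        have h' : ((j : ℂ) + 1) * Ac f (j+2) 1 = 0 := by
          push_cast at h ⊢; linear_combination h
        exact (mul_eq_zero.mp h').resolve_left hj
  have hf0 : f₁ = 0 := by
    rw [hf₁]
    ext n
    rw [PowerSeries.coeff_mk, map_zero]
    exact ha n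
  refine ⟨?_, hf0⟩
  rw [hf0]
  simp
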